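/- Let h > 0 and let G : [−2h, 2h] → ℝ be three times continuously differentiable. Then ∫_{−2h}^{2h} R_h(t) G'''(t) dt = −(G'(2h) + 6G'(0) + G'(−2h))/(2h) + (G(2h) − G(−2h))/h². -/

import Mathlib

open MeasureTheory intervalIntegral

/-- The piecewise quadratic function `R_h`. -/
noncomputable def bumpR (h t : ℝ) : ℝ :=
  if |t| ≤ 2 * h then 1 - 3 * |t| / (2 * h) + t ^ 2 / (2 * h ^ 2) else 0

lemma piece_int (h : ℝ) (hh : 0 < h) (c d : ℝ) (hcd : c ≤ d)
    (hsub : Set.Icc c d ⊆ Set.Icc (-(2 * h)) (2 * h))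
    (G G' G'' G''' : ℝ → ℝ)
    (hG' : ∀ t ∈ Set.Icc (-(2 * h)) (2 * h), HasDerivWithinAt G (G' t) (Set.Icc (-(2 * h)) (2 * h)) t)
    (hG'' : ∀ t ∈ Set.Icc (-(2 * h)) (2 * h), HasDerivWithinAt G' (G'' t) (Set.Icc (-(2 * h)) (2 * h)) t)
    (hG''' : ∀ t ∈ Set.Icc (-(2 * h)) (2 * h), HasDerivWithinAt G'' (G''' t) (Set.Icc (-(2 * h)) (2 * h)) t)
    (hcont : ContinuousOn G''' (Set.Icc (-(2 * h)) (2 * h)))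
    (u u' : ℝ → ℝ) (k : ℝ)
    (hu : ∀ t, HasDerivAt u (u' t) t) (hu' : ∀ t, HasDerivAt u' k t) :
    ∫ t in c..d, u t * G''' t
      = u d * G'' d - u c * G'' c - (u' d * G' d - u' c * G' c) + k * (G d - G c) := by
  have huIcc : Set.uIcc c d = Set.Icc c d := Set.uIcc_of_le hcd
  -- continuity of the G chain on the big interval
  have contG''' : ContinuousOn G''' (Set.Icc (-(2 * h)) (2 * h)) := hcont
  have contG'' : ContinuousOn G'' (Set.Icc (-(2 * h)) (2 * h)) :=
    fun t ht => (hG''' t ht).continuousWithinAt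
  have contG' : ContinuousOn G' (Set.Icc (-(2 * h)) (2 * h)) :=
    fun t ht => (hG'' t ht).continuousWithinAt
  have contG : ContinuousOn G (Set.Icc (-(2 * h)) (2 * h)) :=
    fun t ht => (hG' t ht).continuousWithinAt
  -- integrabilities
  have iG''' : IntervalIntegrable G''' volume c d := by
    apply ContinuousOn.intervalIntegrable; rw [huIcc]; exact contG'''.mono hsub
  have iG'' : IntervalIntegrable G'' volume c d := by
    apply ContinuousOn.intervalIntegrable; rw [huIcc]; exact contG''.mono hsub
  have iG' : IntervalIntegrable G' volume c d := by
    apply ContinuousOn.intervalIntegrable; rw [huIcc]; exact contG'.mono hsub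
  have iu' : IntervalIntegrable u' volume c d := by
    apply ContinuousOn.intervalIntegrable
    exact fun t _ => (hu' t).continuousAt.continuousWithinAt
  have ik : IntervalIntegrable (fun _ : ℝ => k) volume c d := intervalIntegrable_const
  -- within-derivatives on [c,d]
  have hG'sub : ∀ x ∈ Set.uIcc c d, HasDerivWithinAt G' (G'' x) (Set.uIcc c d) x := by
    rw [huIcc]; exact fun x hx => (hG'' x (hsub hx)).mono hsub
  have hG''sub : ∀ x ∈ Set.uIcc c d, HasDerivWithinAt G'' (G''' x) (Set.uIcc c d) x := by
    rw [huIcc]; exact fun x hx => (hG''' x (hsub hx)).mono hsub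
  have husub : ∀ x ∈ Set.uIcc c d, HasDerivWithinAt u (u' x) (Set.uIcc c d) x :=
    fun x _ => (hu x).hasDerivWithinAt
  have hu'sub : ∀ x ∈ Set.uIcc c d, HasDerivWithinAt u' k (Set.uIcc c d) x :=
    fun x _ => (hu' x).hasDerivWithinAt
  rw [integral_mul_deriv_eq_deriv_mul_of_hasDerivWithinAt husub hG''sub iu' iG''']
  rw [integral_mul_deriv_eq_deriv_mul_of_hasDerivWithinAt hu'sub hG'sub ik iG'']
  have hFTC : ∫ x in c..d, G' x = G d - G c := by
    apply integral_eq_sub_of_hasDeriv_right_of_le hcd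
    · exact contG.mono hsub
    · intro x hx
      have hx' : x ∈ Set.Ioo (-(2 * h)) (2 * h) := by
        have hc := hsub (Set.left_mem_Icc.2 hcd)
        have hd := hsub (Set.right_mem_Icc.2 hcd)
        exact ⟨lt_of_le_of_lt hc.1 hx.1, lt_of_lt_of_le hx.2 hd.2⟩
      exact ((hG' x (Set.Ioo_subset_Icc_self hx')).hasDerivAt
        (Icc_mem_nhds hx'.1 hx'.2)).hasDerivWithinAt
    · exact iG'
  have : ∫ x in c..d, (fun _ : ℝ => k) x * G' x = k * (G d - G c) := by
    simp only [intervalIntegral.integral_const_mul, hFTC]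
  rw [this]
  ring

/-- Integration-by-parts identity for `R_h` against `G'''`:
`∫_{−2h}^{2h} R_h(t) G'''(t) dt = −(G'(2h) + 6G'(0) + G'(−2h))/(2h) + (G(2h) − G(−2h))/h²`. -/
theorem bumpR_int_by_parts (h : ℝ) (hh : 0 < h) (G G' G'' G''' : ℝ → ℝ)
    (hG' : ∀ t ∈ Set.Icc (-(2 * h)) (2 * h), HasDerivWithinAt G (G' t) (Set.Icc (-(2 * h)) (2 * h)) t)
    (hG'' : ∀ t ∈ Set.Icc (-(2 * h)) (2 * h), HasDerivWithinAt G' (G'' t) (Set.Icc (-(2 * h)) (2 * h)) t)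
    (hG''' : ∀ t ∈ Set.Icc (-(2 * h)) (2 * h), HasDerivWithinAt G'' (G''' t) (Set.Icc (-(2 * h)) (2 * h)) t)
    (hcont : ContinuousOn G''' (Set.Icc (-(2 * h)) (2 * h))) :
    ∫ t in (-(2 * h))..(2 * h), bumpR h t * G''' t
      = -((G' (2 * h) + 6 * G' 0 + G' (-(2 * h))) / (2 * h)) + (G (2 * h) - G (-(2 * h))) / h ^ 2 := by
  have h2h : (0:ℝ) < 2 * h := by linarith
  have hsubR : Set.Icc (0:ℝ) (2 * h) ⊆ Set.Icc (-(2 * h)) (2 * h) :=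
    Set.Icc_subset_Icc (by linarith) le_rfl
  have hsubL : Set.Icc (-(2 * h)) (0:ℝ) ⊆ Set.Icc (-(2 * h)) (2 * h) :=
    Set.Icc_subset_Icc le_rfl (by linarith)
  -- polynomials and their derivatives
  set pR : ℝ → ℝ := fun t => 1 - 3 * t / (2 * h) + t ^ 2 / (2 * h ^ 2) with hpR
  set pR' : ℝ → ℝ := fun t => -(3 / (2 * h)) + t / h ^ 2 with hpR'
  set pL : ℝ → ℝ := fun t => 1 + 3 * t / (2 * h) + t ^ 2 / (2 * h ^ 2) with hpL
  set pL' : ℝ → ℝ := fun t => 3 / (2 * h) + t / h ^ 2 with hpL'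
  have hhne : h ≠ 0 := ne_of_gt hh
  have hdR : ∀ t, HasDerivAt pR (pR' t) t := by
    intro t
    have : HasDerivAt pR (0 - 3 * 1 / (2 * h) + 2 * t / (2 * h ^ 2)) t := by
      apply ((hasDerivAt_const t (1:ℝ)).sub (((hasDerivAt_id t).const_mul 3).div_const
        (2 * h))).add
      simpa using ((hasDerivAt_pow 2 t).div_const (2 * h ^ 2))
    convert this using 1
    ring
  have hdR' : ∀ t, HasDerivAt pR' (1 / h ^ 2) t := by
    intro t
    have : HasDerivAt pR' (0 + 1 / h ^ 2) t :=
      (hasDerivAt_const t (-(3 / (2 * h)))).add ((hasDerivAt_id t).div_const (h ^ 2))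
    simpa using this
  have hdL : ∀ t, HasDerivAt pL (pL' t) t := by
    intro t
    have : HasDerivAt pL (0 + 3 * 1 / (2 * h) + 2 * t / (2 * h ^ 2)) t := by
      apply ((hasDerivAt_const t (1:ℝ)).add (((hasDerivAt_id t).const_mul 3).div_const
        (2 * h))).add
      simpa using ((hasDerivAt_pow 2 t).div_const (2 * h ^ 2))
    convert this using 1
    ring
  have hdL' : ∀ t, HasDerivAt pL' (1 / h ^ 2) t := by
    intro t
    have : HasDerivAt pL' (0 + 1 / h ^ 2) t :=
      (hasDerivAt_const t (3 / (2 * h))).add ((hasDerivAt_id t).div_const (h ^ 2))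
    simpa using this
  -- bumpR agrees with the polynomials on each piece
  have heqR : Set.EqOn (fun t => bumpR h t * G''' t) (fun t => pR t * G''' t)
      (Set.uIcc (0:ℝ) (2 * h)) := by
    intro t ht
    rw [Set.uIcc_of_le (le_of_lt h2h)] at ht
    have habs : |t| = t := abs_of_nonneg ht.1
    simp only [bumpR, habs, if_pos ht.2, hpR]
  have heqL : Set.EqOn (fun t => bumpR h t * G''' t) (fun t => pL t * G''' t)
      (Set.uIcc (-(2 * h)) (0:ℝ)) := by
    intro t ht
    rw [Set.uIcc_of_le (by linarith : -(2*h) ≤ (0:ℝ))] at ht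
    have habs : |t| = -t := abs_of_nonpos ht.2
    have hle : |t| ≤ 2 * h := by rw [habs]; linarith [ht.1]
    simp only [bumpR, hpL]
    rw [if_pos hle, habs]
    ring
  -- piece integrals
  have hIR := piece_int h hh 0 (2 * h) (le_of_lt h2h) hsubR G G' G'' G''' hG' hG'' hG''' hcont
    pR pR' (1 / h ^ 2) hdR hdR'
  have hIL := piece_int h hh (-(2 * h)) 0 (by linarith) hsubL G G' G'' G''' hG' hG'' hG''' hcont
    pL pL' (1 / h ^ 2) hdL hdL'
  -- integrability of the pieces (for splitting)
  have icontR : IntervalIntegrable (fun t => pR t * G''' t) volume 0 (2 * h) := by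
    apply ContinuousOn.intervalIntegrable
    rw [Set.uIcc_of_le (le_of_lt h2h)]
    exact (Continuous.continuousOn ((continuous_const.sub ((continuous_const.mul continuous_id).div_const
      (2 * h))).add ((continuous_pow 2).div_const (2 * h ^ 2)))).mul (hcont.mono hsubR)
  have icontL : IntervalIntegrable (fun t => pL t * G''' t) volume (-(2 * h)) 0 := by
    apply ContinuousOn.intervalIntegrable
    rw [Set.uIcc_of_le (by linarith : -(2*h) ≤ (0:ℝ))]
    exact (Continuous.continuousOn ((continuous_const.add ((continuous_const.mul continuous_id).div_const
      (2 * h))).add ((continuous_pow 2).div_const (2 * h ^ 2)))).mul (hcont.mono hsubL)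
  have ibR : IntervalIntegrable (fun t => bumpR h t * G''' t) volume 0 (2 * h) := by
    apply icontR.congr
    intro x hx
    exact (heqR (Set.uIoc_subset_uIcc hx)).symm
  have ibL : IntervalIntegrable (fun t => bumpR h t * G''' t) volume (-(2 * h)) 0 := by
    apply icontL.congr
    intro x hx
    exact (heqL (Set.uIoc_subset_uIcc hx)).symm
  rw [← integral_add_adjacent_intervals ibL ibR,
    integral_congr heqL, integral_congr heqR, hIL, hIR]
  have e1 : pR (2 * h) = 0 := by simp only [hpR]; field_simp; ring
  have e2 : pR 0 = 1 := by simp only [hpR]; field_simp; ring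
  have e3 : pR' (2 * h) = 1 / (2 * h) := by simp only [hpR']; field_simp; ring
  have e4 : pR' 0 = -(3 / (2 * h)) := by simp only [hpR']; simp
  have e5 : pL (-(2 * h)) = 0 := by simp only [hpL]; field_simp; ring
  have e6 : pL 0 = 1 := by simp only [hpL]; field_simp; ring
  have e7 : pL' (-(2 * h)) = -(1 / (2 * h)) := by simp only [hpL']; field_simp; ring
  have e8 : pL' 0 = 3 / (2 * h) := by simp only [hpL']; simp
  rw [e1, e2, e3, e4, e5, e6, e7, e8]
  field_simp
  ring
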